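/- Let M = (S, A, T, i) be an MDP, t ∈ S a state with i(t) = 0, and π any policy for M. Then the probability to reach t in M under π equals the expected undiscounted accumulated reward of π in the MDP with rewards M_t; that is, P^M_{π,i}(Runs_t) = E^{M_t}_{π,i}(r_{R_t}), where Runs_t is the set of runs of M that visit t, and r_{R_t}(s0,a0,s1,a1,…) = Σ_{k≥0} R_t(s_k, a_k, s_{k+1}). -/

import Mathlib

open MeasureTheory ENNReal

namespace PMDPEncoding

universe u v w

variable {S : Type u} {A : Type v} {X : Type w}

/-- An infinite alternating sequence of state-action pairs
(the `k`-th pair consists of the `k`-th state and the `k`-th action of the run). -/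
abbrev RunSeq (S : Type u) (A : Type v) := ℕ → S × A

/-- `ρ` is a run of the MDP with transition function `T`:
all transitions have positive probability. -/
def IsRun (T : S → A → PMF S) (ρ : RunSeq S A) : Prop :=
  ∀ k, 0 < T (ρ k).1 (ρ k).2 (ρ (k + 1)).1

/-- A history: a finite list of state-action pairs followed by a final state. -/
abbrev Hist (S : Type u) (A : Type v) := List (S × A) × S

/-- The first state of a history. -/
def Hist.first (h : Hist S A) : S :=
  match h.1 with
  | [] => h.2
  | p :: _ => p.1

/-- Auxiliary for `IsHist`: validity of the list part of a history with final state `t`. -/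
def IsHistL (T : S → A → PMF S) : List (S × A) → S → Prop
  | [], _ => True
  | (s, a) :: rest, t => 0 < T s a (Hist.first (rest, t)) ∧ IsHistL T rest t

/-- `h` is a history (finite prefix of a run) of the MDP with transition function `T`. -/
def IsHist (T : S → A → PMF S) (h : Hist S A) : Prop := IsHistL T h.1 h.2

/-- The set of runs of the MDP with transition function `T`. -/
def Runs (T : S → A → PMF S) := {ρ : RunSeq S A // IsRun T ρ}

/-- The set of (raw) sequences having the history `h` as a prefix. -/
def ConeSeq (h : Hist S A) : Set (RunSeq S A) :=
  {ρ | (∀ k, (hk : k < h.1.length) → ρ k = h.1[k]'hk) ∧ (ρ h.1.length).1 = h.2}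

/-- The cone of a history: the set of runs with prefix `h`. -/
def Cone (T : S → A → PMF S) (h : Hist S A) : Set (Runs T) :=
  {ρ | ρ.1 ∈ ConeSeq h}

/-- The σ-algebra on runs generated by the cones of histories. -/
instance conesAlg (T : S → A → PMF S) : MeasurableSpace (Runs T) :=
  MeasurableSpace.generateFrom {C | ∃ h : Hist S A, IsHist T h ∧ C = Cone T h}

/-- Valid histories of an MDP, as a subtype. -/
def HistOf (T : S → A → PMF S) := {h : Hist S A // IsHist T h}

/-- Auxiliary function for the probability of a cone:
`pre` is the prefix of the history processed so far. -/
noncomputable def coneProbAux (T : S → A → PMF S) (π : Hist S A → PMF A) :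
    List (S × A) → List (S × A) → S → ℝ≥0∞
  | _, [], _ => 1
  | pre, (s, a) :: rest, t =>
      π (pre, s) a * T s a (Hist.first (rest, t)) *
        coneProbAux T π (pre ++ [(s, a)]) rest t

/-- The probability `i(s₀) · ∏_{k<n} π(s₀a₀…s_k)(a_k) · T(s_k,a_k)(s_{k+1})` that the
induced measure of policy `π` and initial distribution `i` assigns to the cone of a history. -/
noncomputable def coneProb (T : S → A → PMF S) (i : PMF S) (π : Hist S A → PMF A)
    (h : Hist S A) : ℝ≥0∞ :=
  i h.first * coneProbAux T π [] h.1 h.2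

/-- The evaluated transition function `T_x` of a pMDP at parameter point `x`. -/
def evalT (T : S → A → X → PMF S) (x : X) : S → A → PMF S := fun s a => T s a x

/-- Runs of a pMDP: pairs `(x, ρ)` of a parameter value `x` and a run `ρ` of `M(x)`. -/
def RunsX (T : S → A → X → PMF S) := {q : X × RunSeq S A // IsRun (evalT T q.1) q.2}

/-- Valid histories of a pMDP: pairs `(x, h)` with `h` a history of `M(x)`. -/
def HistX (T : S → A → X → PMF S) := {q : X × Hist S A // IsHist (evalT T q.1) q.2}

/-- The generator set `{x} × Cone(h)` of the σ-algebra on the runs of a pMDP. -/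
def ConeX (T : S → A → X → PMF S) (x : X) (h : Hist S A) : Set (RunsX T) :=
  {q | q.1.1 = x ∧ q.1.2 ∈ ConeSeq h}

/-- The σ-algebra on the runs of a pMDP generated by the sets `{x} × Cone(h)`. -/
instance conesXAlg (T : S → A → X → PMF S) : MeasurableSpace (RunsX T) :=
  MeasurableSpace.generateFrom
    {C | ∃ (x : X) (h : Hist S A), IsHist (evalT T x) h ∧ C = ConeX T x h}

/-- The transition function `T'` of the induced POMDP of a pMDP:
`T'((s,x),a)(s',x') = T(s,a)(x)(s') · δ_x(x')`. -/
noncomputable def indT (T : S → A → X → PMF S) : S × X → A → PMF (S × X) :=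
  fun sx a => (T sx.1 a sx.2).map fun s' => (s', sx.2)

/-- The observation function of the induced POMDP: `O(s,x) = s`. -/
def obs : S × X → S := Prod.fst

/-- The observation map extended to histories of the induced POMDP. -/
def obsHist : Hist (S × X) A → Hist S A :=
  fun h => (h.1.map fun p => (p.1.1, p.2), h.2.1)

/-- The map `f` on raw sequences: `f(x, s₀·a₀·s₁·⋯) = (s₀,x)·a₀·(s₁,x)·⋯`. -/
def fSeq (x : X) (ρ : RunSeq S A) : RunSeq (S × X) A :=
  fun k => (((ρ k).1, x), (ρ k).2)

theorem indT_pos {T : S → A → X → PMF S} {s s' : S} {a : A} {x : X}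
    (h : 0 < T s a x s') : 0 < indT T (s, x) a (s', x) := by
  have hmem : (s', x) ∈ ((T s a x).map fun u => (u, x)).support := by
    rw [PMF.support_map]
    exact ⟨s', (PMF.mem_support_iff _ _).2 h.ne', rfl⟩
  exact pos_iff_ne_zero.mpr ((PMF.mem_support_iff _ _).1 hmem)

/-- The map `f : Runs_X → Runs'` from the runs of a pMDP to the runs of its induced POMDP. -/
def fRun (T : S → A → X → PMF S) (q : RunsX T) : Runs (indT T) :=
  ⟨fSeq q.1.1 q.1.2, fun k => indT_pos (q.2 k)⟩

/-- The map `f` on raw histories: `f(x, s₀·a₀·⋯·s_n) = (s₀,x)·a₀·⋯·(s_n,x)`. -/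
def fHistSeq (x : X) (h : Hist S A) : Hist (S × X) A :=
  (h.1.map fun p => ((p.1, x), p.2), (h.2, x))

theorem isHist_fHistSeq (T : S → A → X → PMF S) (x : X) :
    ∀ (l : List (S × A)) (t : S), IsHist (evalT T x) (l, t) →
      IsHist (indT T) (fHistSeq x (l, t))
  | [], _, _ => trivial
  | (s, a) :: rest, t, hv => by
      obtain ⟨h1, h2⟩ := hv
      have hrec := isHist_fHistSeq T x rest t h2
      refine ⟨?_, hrec⟩
      show 0 < indT T (s, x) a (Hist.first ((rest.map fun p => ((p.1, x), p.2)), (t, x)))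
      have hfirst : Hist.first ((rest.map fun p => ((p.1, x), p.2) : List ((S × X) × A)), (t, x)) =
          (Hist.first (rest, t), x) := by
        cases rest <;> rfl
      rw [hfirst]
      exact indT_pos h1

/-- The map `f : Hist_X → Hist'` from the histories of a pMDP to the histories of
its induced POMDP. -/
def fHistX (T : S → A → X → PMF S) (q : HistX T) : HistOf (indT T) :=
  ⟨fHistSeq q.1.1 q.1.2, isHist_fHistSeq T q.1.1 q.1.2.1 q.1.2.2 q.2⟩

/-- Some run of an MDP: start anywhere, always pick a fixed action, and follow the
support of the transition distributions. -/
noncomputable def someRunSeq (T : S → A → PMF S) (sa : S × A) (a : A) : RunSeq S A :=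
  fun k => Nat.rec sa (fun _ ih => ((PMF.support_nonempty (T ih.1 ih.2)).some, a)) k

theorem someRunSeq_isRun (T : S → A → PMF S) (sa : S × A) (a : A) :
    IsRun T (someRunSeq T sa a) := by
  intro k
  exact pos_iff_ne_zero.mpr <| (PMF.mem_support_iff _ _).1 <|
    (PMF.support_nonempty (T (someRunSeq T sa a k).1 (someRunSeq T sa a k).2)).some_mem

instance instNonemptyRuns [Nonempty S] [Nonempty A] (T : S → A → PMF S) :
    Nonempty (Runs T) :=
  ⟨⟨someRunSeq T (Classical.arbitrary S, Classical.arbitrary A) (Classical.arbitrary A),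
    someRunSeq_isRun _ _ _⟩⟩

instance instNonemptyRunsX [Nonempty S] [Nonempty A] [Nonempty X] (T : S → A → X → PMF S) :
    Nonempty (RunsX T) :=
  ⟨⟨(Classical.arbitrary X,
      someRunSeq (evalT T (Classical.arbitrary X))
        (Classical.arbitrary S, Classical.arbitrary A) (Classical.arbitrary A)),
    someRunSeq_isRun _ _ _⟩⟩

instance instNonemptyHistX [Nonempty S] [Nonempty X] (T : S → A → X → PMF S) :
    Nonempty (HistX T) :=
  ⟨⟨(Classical.arbitrary X, ([], Classical.arbitrary S)), trivial⟩⟩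

instance instNonemptyHistOf [Nonempty S] (T : S → A → PMF S) :
    Nonempty (HistOf T) :=
  ⟨⟨([], Classical.arbitrary S), trivial⟩⟩

/-- The transition function `T_t` of the MDP with rewards `M_t`: the target `t` is made
absorbing. -/
noncomputable def targetT [DecidableEq S] (T : S → A → PMF S) (t : S) : S → A → PMF S :=
  fun s a => if s = t then PMF.pure t else T s a

section ReachAux

set_option linter.unusedSectionVars false

variable [DecidableEq S]

lemma targetT_apply_ne {T : S → A → PMF S} {t s : S} (hs : s ≠ t) (a : A) :
    targetT T t s a = T s a := if_neg hs

lemma targetT_absorb {T : S → A → PMF S} {t : S} (ρ : Runs (targetT T t))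
    {k m : ℕ} (hkm : k ≤ m) (hk : (ρ.1 k).1 = t) : (ρ.1 m).1 = t := by
  induction m, hkm using Nat.le_induction with
  | base => exact hk
  | succ m hm ih =>
    have hpos := ρ.2 m
    rw [ih] at hpos
    simp only [targetT, if_pos rfl, PMF.pure_apply] at hpos
    by_contra hne
    simp [hne] at hpos

lemma isHistL_cons (T₀ : S → A → PMF S) (p : S × A) (rest : List (S × A)) (u : S) :
    IsHistL T₀ (p :: rest) u ↔
      0 < T₀ p.1 p.2 (Hist.first (rest, u)) ∧ IsHistL T₀ rest u := by
  cases p; exact Iff.rfl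

lemma coneProbAux_cons (T₀ : S → A → PMF S) (π : Hist S A → PMF A)
    (pre : List (S × A)) (p : S × A) (rest : List (S × A)) (u : S) :
    coneProbAux T₀ π pre (p :: rest) u =
      π (pre, p.1) p.2 * T₀ p.1 p.2 (Hist.first (rest, u)) *
        coneProbAux T₀ π (pre ++ [p]) rest u := by
  cases p; rfl

lemma coneProbAux_targetT (T : S → A → PMF S) (t : S) (π : Hist S A → PMF A) :
    ∀ (l pre : List (S × A)) (u : S), (∀ p ∈ l, p.1 ≠ t) →
      coneProbAux (targetT T t) π pre l u = coneProbAux T π pre l u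
  | [], _, _, _ => rfl
  | p :: rest, pre, u, hl => by
    rw [coneProbAux_cons, coneProbAux_cons,
      targetT_apply_ne (hl p List.mem_cons_self),
      coneProbAux_targetT T t π rest (pre ++ [p]) u
        (fun q hq => hl q (List.mem_cons_of_mem _ hq))]

lemma isHistL_targetT (T : S → A → PMF S) (t : S) :
    ∀ (l : List (S × A)) (u : S), (∀ p ∈ l, p.1 ≠ t) →
      (IsHistL (targetT T t) l u ↔ IsHistL T l u)
  | [], _, _ => Iff.rfl
  | p :: rest, u, hl => by
    rw [isHistL_cons, isHistL_cons,
      targetT_apply_ne (hl p List.mem_cons_self),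
      isHistL_targetT T t rest u (fun q hq => hl q (List.mem_cons_of_mem _ hq))]

lemma first_ofFn (σ : RunSeq S A) (n : ℕ) :
    Hist.first (List.ofFn (fun j : Fin n => σ j), (σ n).1) = (σ 0).1 := by
  cases n with
  | zero => rfl
  | succ m => rw [List.ofFn_succ]; rfl

lemma isHistL_ofFn (T₀ : S → A → PMF S) :
    ∀ (n : ℕ) (σ : RunSeq S A),
      (∀ k, k < n → 0 < T₀ (σ k).1 (σ k).2 (σ (k + 1)).1) →
      IsHistL T₀ (List.ofFn fun j : Fin n => σ j) ((σ n).1)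
  | 0, _, _ => trivial
  | n + 1, σ, hpos => by
    rw [List.ofFn_succ]
    rw [isHistL_cons]
    constructor
    · have h1 : Hist.first ((List.ofFn fun i : Fin n => σ (i.1 + 1)), (σ (n + 1)).1)
          = (σ 1).1 := first_ofFn (fun k => σ (k + 1)) n
      simp only [Fin.val_succ] at *
      rw [h1]
      exact hpos 0 (Nat.succ_pos n)
    · have := isHistL_ofFn T₀ n (fun k => σ (k + 1))
        (fun k hk => hpos (k + 1) (Nat.succ_lt_succ hk))
      simpa using this

/-- The set of "first-hit" histories: nonempty histories ending at `t` whose other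
states avoid `t`. -/
def HitHists (T₀ : S → A → PMF S) (t : S) : Set (Hist S A) :=
  {h | h.2 = t ∧ h.1 ≠ [] ∧ (∀ p ∈ h.1, p.1 ≠ t) ∧ IsHist T₀ h}

lemma hitHists_targetT (T : S → A → PMF S) (t : S) :
    HitHists (targetT T t) t = HitHists T t := by
  ext h
  exact and_congr_right fun _ => and_congr_right fun _ => and_congr_right fun hst =>
    isHistL_targetT T t h.1 h.2 hst

lemma exists_hitHist {T₀ : S → A → PMF S} {t : S} (ρ : Runs T₀)
    (h0 : (ρ.1 0).1 ≠ t) (hex : ∃ k, (ρ.1 k).1 = t) :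
    ∃ h ∈ HitHists T₀ t, ρ ∈ Cone T₀ h := by
  classical
  have hnt : (ρ.1 (Nat.find hex)).1 = t := Nat.find_spec hex
  set n := Nat.find hex with hn
  have hpos : 0 < n := Nat.pos_of_ne_zero fun h => h0 (by simpa [h] using hnt)
  refine ⟨(List.ofFn fun j : Fin n => ρ.1 j, t), ⟨rfl, ?_, ?_, ?_⟩, ?_, ?_⟩
  · simp [List.ofFn_eq_nil_iff, Nat.pos_iff_ne_zero.mp hpos]
  · intro p hp
    rw [List.mem_ofFn] at hp
    obtain ⟨j, rfl⟩ := hp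
    exact Nat.find_min hex j.2
  · show IsHistL T₀ _ t
    rw [← hnt]
    exact isHistL_ofFn T₀ n ρ.1 (fun k _ => ρ.2 k)
  · intro k hk
    simp only [List.getElem_ofFn]
  · simp [hnt]

lemma mem_cone_hit {T₀ : S → A → PMF S} {t : S} {h : Hist S A}
    (hh : h ∈ HitHists T₀ t) {ρ : Runs T₀} (hρ : ρ ∈ Cone T₀ h) :
    (ρ.1 0).1 ≠ t ∧ ∃ k, (ρ.1 k).1 = t := by
  obtain ⟨ht, hne, hst, _⟩ := hh
  obtain ⟨hpref, hend⟩ := hρ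
  have hlen : 0 < h.1.length := List.length_pos_iff.2 hne
  refine ⟨?_, ⟨h.1.length, by rw [hend, ht]⟩⟩
  rw [hpref 0 hlen]
  exact hst _ (List.getElem_mem _)

lemma coneSeq_hit_eq {t : S} {h h' : Hist S A}
    (ht : h.2 = t) (ht' : h'.2 = t)
    (hst : ∀ p ∈ h.1, p.1 ≠ t) (hst' : ∀ p ∈ h'.1, p.1 ≠ t)
    {σ : RunSeq S A} (hσ : σ ∈ ConeSeq h) (hσ' : σ ∈ ConeSeq h') : h = h' := by
  have key : ∀ {a b : Hist S A}, a.2 = t → (∀ p ∈ b.1, p.1 ≠ t) →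
      σ ∈ ConeSeq a → σ ∈ ConeSeq b → ¬ a.1.length < b.1.length := by
    intro a b hta hsb hsa hsb' hlt
    have h1 : (σ a.1.length).1 = t := by rw [hsa.2, hta]
    have h2 := hsb'.1 a.1.length hlt
    rw [h2] at h1
    exact hsb _ (List.getElem_mem _) h1
  have hlen : h.1.length = h'.1.length := by
    rcases Nat.lt_trichotomy h.1.length h'.1.length with hl | hl | hl
    · exact absurd hl (key ht hst' hσ hσ')
    · exact hl
    · exact absurd hl (key ht' hst hσ' hσ)
  have hlist : h.1 = h'.1 := by
    apply List.ext_getElem hlen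
    intro k hk hk'
    rw [← hσ.1 k hk, ← hσ'.1 k hk']
  exact Prod.ext hlist (ht.trans ht'.symm)

lemma hitHists_pairwiseDisjoint {T₀ T₁ : S → A → PMF S} (t : S) :
    (HitHists T₀ t).PairwiseDisjoint (Cone T₁) := by
  intro h hh h' hh' hne
  rw [Function.onFun, Set.disjoint_left]
  intro ρ hρ hρ'
  exact hne (coneSeq_hit_eq hh.1 hh'.1 hh.2.2.1 hh'.2.2.1 hρ hρ')

lemma tsum_reward_eq_indicator {T : S → A → PMF S} {t : S} (ρ : Runs (targetT T t)) :
    (∑' k : ℕ, if (ρ.1 k).1 ≠ t ∧ (ρ.1 (k + 1)).1 = t then (1 : ℝ) else 0) =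
      Set.indicator {ρ : Runs (targetT T t) | (ρ.1 0).1 ≠ t ∧ ∃ k, (ρ.1 k).1 = t}
        (fun _ => (1 : ℝ)) ρ := by
  classical
  by_cases hρ : (ρ.1 0).1 ≠ t ∧ ∃ k, (ρ.1 k).1 = t
  · rw [Set.indicator_apply, if_pos (show ρ ∈ _ from hρ)]
    obtain ⟨h0, hex⟩ := hρ
    have hnt : (ρ.1 (Nat.find hex)).1 = t := Nat.find_spec hex
    set n := Nat.find hex with hn
    have hpos : 0 < n := Nat.pos_of_ne_zero fun h => h0 (by simpa [h] using hnt)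
    have huniq : ∀ b : ℕ, b ≠ n - 1 →
        (if (ρ.1 b).1 ≠ t ∧ (ρ.1 (b + 1)).1 = t then (1 : ℝ) else 0) = 0 := by
      intro b hb
      rw [if_neg]
      rintro ⟨hb1, hb2⟩
      rcases Nat.lt_or_ge b (n - 1) with hlt | hge
      · exact Nat.find_min hex (by omega) hb2
      · exact hb1 (targetT_absorb ρ (by omega) hnt)
    rw [tsum_eq_single (n - 1) huniq, if_pos]
    refine ⟨fun h => Nat.find_min hex (by omega) h, ?_⟩
    rw [show n - 1 + 1 = n by omega]
    exact hnt
  · rw [Set.indicator_apply, if_neg (show ρ ∉ _ from hρ)]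
    have hz : ∀ k : ℕ, (if (ρ.1 k).1 ≠ t ∧ (ρ.1 (k + 1)).1 = t then (1 : ℝ) else 0) = 0 := by
      intro k
      rw [if_neg]
      rintro ⟨h1, h2⟩
      rw [not_and_or] at hρ
      rcases hρ with h0 | hnex
      · push_neg at h0
        exact h1 (targetT_absorb ρ (Nat.zero_le k) h0)
      · exact hnex ⟨k + 1, h2⟩
    simp [hz]

end ReachAux

/-- Let `M = (S, A, T, i)` be an MDP, `t ∈ S` a state with `i(t) = 0`,
and `π` any policy for `M`. Then the probability to reach `t` in `M` under `π` equals the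
expected undiscounted accumulated reward of `π` in the MDP with rewards `M_t`:
`P^M_{π,i}(Runs_t) = E^{M_t}_{π,i}(r_{R_t})`, where
`r_{R_t}(s₀,a₀,s₁,a₁,…) = Σ_{k≥0} R_t(s_k, a_k, s_{k+1})` and `R_t(s,a,s') = 1` iff
`s ≠ t` and `s' = t`. -/
theorem reach_prob_eq_expected_reward [Countable S] [Countable A] [DecidableEq S]
    (T : S → A → PMF S) (i : PMF S) (t : S) (hit : i t = 0)
    (π : Hist S A → PMF A)
    (P : Measure (Runs T)) [IsProbabilityMeasure P]
    (hP : ∀ h : Hist S A, IsHist T h → P (Cone T h) = coneProb T i π h)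
    (Q : Measure (Runs (targetT T t))) [IsProbabilityMeasure Q]
    (hQ : ∀ h : Hist S A, IsHist (targetT T t) h →
      Q (Cone (targetT T t) h) = coneProb (targetT T t) i π h) :
    (P {ρ : Runs T | ∃ k, (ρ.1 k).1 = t}).toReal =
      ∫ ρ, (∑' k : ℕ, if (ρ.1 k).1 ≠ t ∧ (ρ.1 (k + 1)).1 = t then (1 : ℝ) else 0) ∂Q := by
  classical
  have hHmem : ∀ h ∈ HitHists T t, IsHist T h := fun h hh => hh.2.2.2
  have hHmem' : ∀ h ∈ HitHists T t, IsHist (targetT T t) h := by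
    intro h hh
    rw [← hitHists_targetT T t] at hh
    exact hh.2.2.2
  have hcount : (HitHists T t).Countable := Set.to_countable _
  have hmP : ∀ h ∈ HitHists T t, MeasurableSet (Cone T h) :=
    fun h hh => MeasurableSpace.measurableSet_generateFrom ⟨h, hHmem h hh, rfl⟩
  have hmQ : ∀ h ∈ HitHists T t, MeasurableSet (Cone (targetT T t) h) :=
    fun h hh => MeasurableSpace.measurableSet_generateFrom ⟨h, hHmem' h hh, rfl⟩
  -- event descriptions
  have hFeq : {ρ : Runs T | ∃ k, (ρ.1 k).1 = t} =
      Cone T ([], t) ∪ ⋃ h ∈ HitHists T t, Cone T h := by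
    ext ρ
    simp only [Set.mem_setOf_eq, Set.mem_union, Set.mem_iUnion]
    constructor
    · intro hex
      by_cases h0 : (ρ.1 0).1 = t
      · exact Or.inl ⟨fun k hk => absurd hk (by simp), h0⟩
      · obtain ⟨h, hh, hρ⟩ := exists_hitHist ρ h0 hex
        exact Or.inr ⟨h, hh, hρ⟩
    · rintro (h0 | ⟨h, hh, hρ⟩)
      · exact ⟨0, h0.2⟩
      · exact (mem_cone_hit hh hρ).2
  have hEeq : {ρ : Runs (targetT T t) | (ρ.1 0).1 ≠ t ∧ ∃ k, (ρ.1 k).1 = t} =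
      ⋃ h ∈ HitHists T t, Cone (targetT T t) h := by
    ext ρ
    simp only [Set.mem_setOf_eq, Set.mem_iUnion]
    constructor
    · rintro ⟨h0, hex⟩
      obtain ⟨h, hh, hρ⟩ := exists_hitHist ρ h0 hex
      rw [hitHists_targetT T t] at hh
      exact ⟨h, hh, hρ⟩
    · rintro ⟨h, hh, hρ⟩
      rw [← hitHists_targetT T t] at hh
      exact mem_cone_hit hh hρ
  -- measure computations
  have hPU : P (⋃ h ∈ HitHists T t, Cone T h) = ∑' h : HitHists T t, coneProb T i π h := by
    rw [measure_biUnion hcount (hitHists_pairwiseDisjoint t) hmP]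
    exact tsum_congr fun h => hP h (hHmem h h.2)
  have hQU : Q (⋃ h ∈ HitHists T t, Cone (targetT T t) h) =
      ∑' h : HitHists T t, coneProb T i π h := by
    rw [measure_biUnion hcount (hitHists_pairwiseDisjoint t) hmQ]
    refine tsum_congr fun h => ?_
    rw [hQ h (hHmem' h h.2)]
    unfold coneProb
    rw [coneProbAux_targetT T t π h.1.1 [] h.1.2 h.2.2.2.1]
  have hC0meas : MeasurableSet (Cone T ([], t)) :=
    MeasurableSpace.measurableSet_generateFrom ⟨([], t), trivial, rfl⟩
  have hdisj0 : Disjoint (Cone T ([], t)) (⋃ h ∈ HitHists T t, Cone T h) := by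
    rw [Set.disjoint_left]
    intro ρ hρ hρ'
    simp only [Set.mem_iUnion] at hρ'
    obtain ⟨h, hh, hmem⟩ := hρ'
    exact (mem_cone_hit hh hmem).1 hρ.2
  have hPF : P {ρ : Runs T | ∃ k, (ρ.1 k).1 = t} =
      ∑' h : HitHists T t, coneProb T i π h := by
    rw [hFeq, measure_union hdisj0 (MeasurableSet.biUnion hcount hmP),
      hP ([], t) trivial, hPU]
    have : coneProb T i π ([], t) = 0 := by
      unfold coneProb
      simp [Hist.first, coneProbAux, hit]
    rw [this, zero_add]
  have hEmeas : MeasurableSet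
      {ρ : Runs (targetT T t) | (ρ.1 0).1 ≠ t ∧ ∃ k, (ρ.1 k).1 = t} :=
    hEeq ▸ MeasurableSet.biUnion hcount hmQ
  have hQE : Q {ρ : Runs (targetT T t) | (ρ.1 0).1 ≠ t ∧ ∃ k, (ρ.1 k).1 = t} =
      ∑' h : HitHists T t, coneProb T i π h := by rw [hEeq, hQU]
  have hfun : (fun ρ : Runs (targetT T t) =>
      ∑' k : ℕ, if (ρ.1 k).1 ≠ t ∧ (ρ.1 (k + 1)).1 = t then (1 : ℝ) else 0) =
      Set.indicator {ρ : Runs (targetT T t) | (ρ.1 0).1 ≠ t ∧ ∃ k, (ρ.1 k).1 = t}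
        (fun _ => (1 : ℝ)) := funext fun ρ => tsum_reward_eq_indicator ρ
  rw [hfun, MeasureTheory.integral_indicator_const _ hEmeas, measureReal_def, hQE, hPF]
  simp


end PMDPEncoding
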